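/- Let n ≥ 1 and let A, B, C be n×n complex positive semidefinite matrices. Define J[M] := (tr M)·I − M for any n×n matrix M. Then the matrix A·J[B·C] + C·J[B·A] is positive semidefinite. -/

import Mathlib

open Matrix ComplexOrder

/-- `J[M] := (tr M) • I − M`. -/
noncomputable def Jmat {n : ℕ} (M : Matrix (Fin n) (Fin n) ℂ) : Matrix (Fin n) (Fin n) ℂ :=
  M.trace • (1 : Matrix (Fin n) (Fin n) ℂ) - M


lemma dot_shift {n : ℕ} (M : Matrix (Fin n) (Fin n) ℂ) (x y : Fin n → ℂ) :
    star x ⬝ᵥ (M *ᵥ y) = star (Mᴴ *ᵥ x) ⬝ᵥ y := by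
  rw [Matrix.star_mulVec, Matrix.conjTranspose_conjTranspose, Matrix.dotProduct_mulVec]

open scoped MatrixOrder in
lemma psd_sqrt_exists {n : ℕ} {B : Matrix (Fin n) (Fin n) ℂ} (hB : B.PosSemidef) :
    ∃ S : Matrix (Fin n) (Fin n) ℂ, Sᴴ = S ∧ S * S = B :=
  ⟨CFC.sqrt B, (CFC.sqrt_nonneg B).posSemidef.1, CFC.sqrt_mul_sqrt_self B hB.nonneg⟩

lemma psd_diag_nonneg {n : ℕ} {M : Matrix (Fin n) (Fin n) ℂ} (hM : M.PosSemidef) (i : Fin n) :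
    0 ≤ M i i := by
  have := hM.dotProduct_mulVec_nonneg (Pi.single i 1)
  simpa [dotProduct, Pi.single_apply, apply_ite, Matrix.mulVec] using this

lemma psd_trace_nonneg {n : ℕ} {M : Matrix (Fin n) (Fin n) ℂ} (hM : M.PosSemidef) :
    0 ≤ M.trace := by
  rw [Matrix.trace]
  exact Finset.sum_nonneg fun i _ => psd_diag_nonneg hM i

lemma trace_mul_psd_nonneg {n : ℕ} {A B : Matrix (Fin n) (Fin n) ℂ}
    (hA : A.PosSemidef) (hB : B.PosSemidef) : 0 ≤ (B * A).trace := by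
  obtain ⟨S, hSH', hSS⟩ := psd_sqrt_exists hB
  have h : (S * A * S).trace = (B * A).trace := by
    rw [Matrix.trace_mul_cycle, hSS]
  rw [← h]
  have := (hA.conjTranspose_mul_mul_same S)
  rw [hSH'] at this
  exact psd_trace_nonneg this

lemma cs_re {n : ℕ} (u v : Fin n → ℂ) :
    (star u ⬝ᵥ v).re ^ 2 ≤ (star u ⬝ᵥ u).re * (star v ⬝ᵥ v).re := by
  let u' : EuclideanSpace ℂ (Fin n) := (WithLp.equiv 2 _).symm u
  let v' : EuclideanSpace ℂ (Fin n) := (WithLp.equiv 2 _).symm v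
  have h1 : (inner ℂ u' v' : ℂ) = star u ⬝ᵥ v := by rw [dotProduct_comm]; rfl
  have h2 : (inner ℂ u' u' : ℂ) = star u ⬝ᵥ u := by rw [dotProduct_comm]; rfl
  have h3 : (inner ℂ v' v' : ℂ) = star v ⬝ᵥ v := by rw [dotProduct_comm]; rfl
  have hn : ‖(inner ℂ u' v' : ℂ)‖ ≤ ‖u'‖ * ‖v'‖ := norm_inner_le_norm u' v'
  have hu : RCLike.re (inner ℂ u' u' : ℂ) = ‖u'‖ ^ 2 := inner_self_eq_norm_sq u'
  have hv : RCLike.re (inner ℂ v' v' : ℂ) = ‖v'‖ ^ 2 := inner_self_eq_norm_sq v'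
  rw [← h1, ← h2, ← h3]
  have hre : (inner ℂ u' v' : ℂ).re ^ 2 ≤ ‖(inner ℂ u' v' : ℂ)‖ ^ 2 := by
    have h4 := Complex.sq_norm (inner ℂ u' v' : ℂ)
    rw [Complex.normSq_apply] at h4
    nlinarith [sq_nonneg (inner ℂ u' v' : ℂ).im]
  calc (inner ℂ u' v' : ℂ).re ^ 2 ≤ ‖(inner ℂ u' v' : ℂ)‖ ^ 2 := hre
    _ ≤ (‖u'‖ * ‖v'‖) ^ 2 := by
        apply pow_le_pow_left₀ (norm_nonneg _) hn
    _ = ‖u'‖ ^ 2 * ‖v'‖ ^ 2 := by ring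
    _ = (inner ℂ u' u' : ℂ).re * (inner ℂ v' v' : ℂ).re := by rw [← hu, ← hv]; rfl

lemma dot_shift' {n : ℕ} (M : Matrix (Fin n) (Fin n) ℂ) (x y : Fin n → ℂ) :
    star (M *ᵥ x) ⬝ᵥ y = star x ⬝ᵥ (Mᴴ *ᵥ y) := by
  rw [dot_shift Mᴴ, Matrix.conjTranspose_conjTranspose]

lemma amgm_aux (xr p q : ℝ) (hp : 0 ≤ p) (hq : 0 ≤ q) (hx : xr ^ 2 ≤ p * q) :
    2 * xr ≤ p + q := by
  nlinarith [sq_nonneg (Real.sqrt p - Real.sqrt q), Real.sq_sqrt hp, Real.sq_sqrt hq,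
    Real.sqrt_nonneg p, Real.sqrt_nonneg q,
    mul_nonneg (Real.sqrt_nonneg p) (Real.sqrt_nonneg q)]

lemma diag_helper {n : ℕ} (V : Matrix (Fin n) (Fin n) ℂ) (d : Fin n → ℂ)
    (hd : ∀ i, 0 ≤ d i) (hVV : V * star V = 1) (hVV' : star V * V = 1) :
    (Jmat (V * Matrix.diagonal d * star V)).PosSemidef := by
  have htr : (V * Matrix.diagonal d * star V).trace = ∑ i, d i := by
    rw [Matrix.trace_mul_cycle, hVV', Matrix.one_mul, Matrix.trace_diagonal]
  have hdiag : Matrix.diagonal (fun i => (∑ j, d j) - d i) =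
      (∑ j, d j) • (1 : Matrix (Fin n) (Fin n) ℂ) - Matrix.diagonal d := by
    ext i j
    rcases eq_or_ne i j with rfl | h
    · simp [Matrix.one_apply]
    · simp [Matrix.diagonal_apply_ne _ h, Matrix.one_apply_ne h]
  have hJ : Jmat (V * Matrix.diagonal d * star V) =
      V * Matrix.diagonal (fun i => (∑ j, d j) - d i) * star V := by
    rw [Jmat, htr, hdiag]
    rw [Matrix.mul_sub, Matrix.sub_mul, Matrix.mul_smul, Matrix.smul_mul, Matrix.mul_one, hVV]
  rw [hJ, Matrix.star_eq_conjTranspose]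
  apply Matrix.PosSemidef.mul_mul_conjTranspose_same
  rw [Matrix.posSemidef_diagonal_iff]
  intro i
  have := Finset.single_le_sum (f := d) (fun j _ => hd j) (Finset.mem_univ i)
  simpa using this

lemma jmat_psd {n : ℕ} {M : Matrix (Fin n) (Fin n) ℂ} (hM : M.PosSemidef) :
    (Jmat M).PosSemidef := by
  have hH := hM.1
  have hspec : M = (hH.eigenvectorUnitary : Matrix (Fin n) (Fin n) ℂ) *
      Matrix.diagonal (RCLike.ofReal ∘ hH.eigenvalues) *
      star (hH.eigenvectorUnitary : Matrix (Fin n) (Fin n) ℂ) := hH.spectral_theorem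
  rw [hspec]
  exact diag_helper _ _
    (fun i => by simpa [Complex.zero_le_real] using hM.eigenvalues_nonneg i)
    ((Matrix.mem_unitaryGroup_iff).mp hH.eigenvectorUnitary.2)
    ((Matrix.mem_unitaryGroup_iff').mp hH.eigenvectorUnitary.2)

lemma psd_dot_le_trace {n : ℕ} {M : Matrix (Fin n) (Fin n) ℂ} (hM : M.PosSemidef)
    (w : Fin n → ℂ) :
    star w ⬝ᵥ (M *ᵥ w) ≤ M.trace * (star w ⬝ᵥ w) := by
  have h := (jmat_psd hM).dotProduct_mulVec_nonneg w
  rw [Jmat, Matrix.sub_mulVec, Matrix.smul_mulVec, Matrix.one_mulVec,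
    dotProduct_sub, dotProduct_smul, smul_eq_mul, sub_nonneg] at h
  exact h

theorem stmt0 {n : ℕ} (hn : 1 ≤ n) (A B C : Matrix (Fin n) (Fin n) ℂ)
    (hA : A.PosSemidef) (hB : B.PosSemidef) (hC : C.PosSemidef) :
    (A * Jmat (B * C) + C * Jmat (B * A)).PosSemidef := by
  have htBC : 0 ≤ (B * C).trace := trace_mul_psd_nonneg hC hB
  have htBA : 0 ≤ (B * A).trace := trace_mul_psd_nonneg hA hB
  have htBCs : star (B * C).trace = (B * C).trace := by
    rw [Complex.star_def, Complex.conj_eq_iff_im]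
    exact (Complex.nonneg_iff.mp htBC).2.symm
  have htBAs : star (B * A).trace = (B * A).trace := by
    rw [Complex.star_def, Complex.conj_eq_iff_im]
    exact (Complex.nonneg_iff.mp htBA).2.symm
  have hK : A * Jmat (B * C) + C * Jmat (B * A) =
      (B * C).trace • A + (B * A).trace • C - (A * B * C + C * B * A) := by
    rw [Jmat, Jmat, Matrix.mul_sub, Matrix.mul_sub, Matrix.mul_smul, Matrix.mul_smul,
      Matrix.mul_one, Matrix.mul_one, ← Matrix.mul_assoc, ← Matrix.mul_assoc]
    abel
  rw [hK]
  rw [Matrix.posSemidef_iff_dotProduct_mulVec]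
  constructor
  · show _ᴴ = _
    rw [Matrix.conjTranspose_sub, Matrix.conjTranspose_add, Matrix.conjTranspose_add,
      Matrix.conjTranspose_smul, Matrix.conjTranspose_smul,
      Matrix.conjTranspose_mul, Matrix.conjTranspose_mul, Matrix.conjTranspose_mul,
      Matrix.conjTranspose_mul, hA.1.eq, hB.1.eq, hC.1.eq, htBCs, htBAs]
    rw [Matrix.mul_assoc, Matrix.mul_assoc, ← Matrix.mul_assoc C B A, ← Matrix.mul_assoc A B C]
    abel
  · intro z
    obtain ⟨S, hSH, hSS⟩ : ∃ S : Matrix (Fin n) (Fin n) ℂ, Sᴴ = S ∧ S * S = B :=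
      psd_sqrt_exists hB
    obtain ⟨T, hTH, hTT⟩ : ∃ T : Matrix (Fin n) (Fin n) ℂ, Tᴴ = T ∧ T * T = A :=
      psd_sqrt_exists hA
    obtain ⟨R, hRH, hRR⟩ : ∃ R : Matrix (Fin n) (Fin n) ℂ, Rᴴ = R ∧ R * R = C :=
      psd_sqrt_exists hC
    set u := S *ᵥ (A *ᵥ z) with hu
    set v := S *ᵥ (C *ᵥ z) with hv
    have hABC : star z ⬝ᵥ ((A * B * C) *ᵥ z) = star u ⬝ᵥ v := by
      rw [← Matrix.mulVec_mulVec, ← Matrix.mulVec_mulVec, dot_shift A, hA.1.eq, ← hSS,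
        ← Matrix.mulVec_mulVec, dot_shift S, hSH]
    have hCBA : star z ⬝ᵥ ((C * B * A) *ᵥ z) = star v ⬝ᵥ u := by
      rw [← Matrix.mulVec_mulVec, ← Matrix.mulVec_mulVec, dot_shift C, hC.1.eq, ← hSS,
        ← Matrix.mulVec_mulVec, dot_shift S, hSH]
    have hTz : star (T *ᵥ z) ⬝ᵥ (T *ᵥ z) = star z ⬝ᵥ (A *ᵥ z) := by
      rw [dot_shift' T, hTH, Matrix.mulVec_mulVec, hTT]
    have hRz : star (R *ᵥ z) ⬝ᵥ (R *ᵥ z) = star z ⬝ᵥ (C *ᵥ z) := by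
      rw [dot_shift' R, hRH, Matrix.mulVec_mulVec, hRR]
    have hTBT : (T * B * T).PosSemidef := by
      have := hB.conjTranspose_mul_mul_same T
      rwa [hTH] at this
    have hRBR : (R * B * R).PosSemidef := by
      have := hB.conjTranspose_mul_mul_same R
      rwa [hRH] at this
    have htT : (T * B * T).trace = (B * A).trace := by
      rw [Matrix.trace_mul_cycle, hTT, Matrix.trace_mul_comm]
    have htR : (R * B * R).trace = (B * C).trace := by
      rw [Matrix.trace_mul_cycle, hRR, Matrix.trace_mul_comm]
    have huu : star u ⬝ᵥ u = star (T *ᵥ z) ⬝ᵥ ((T * B * T) *ᵥ (T *ᵥ z)) := by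
      have h1 : star u ⬝ᵥ u = star z ⬝ᵥ ((A * B * A) *ᵥ z) := by
        rw [hu, dot_shift' S, hSH, dot_shift' A, hA.1.eq]
        simp only [Matrix.mulVec_mulVec]
        congr 2
        rw [← hSS]
        noncomm_ring
      have h2 : star (T *ᵥ z) ⬝ᵥ ((T * B * T) *ᵥ (T *ᵥ z)) = star z ⬝ᵥ ((A * B * A) *ᵥ z) := by
        rw [dot_shift' T, hTH]
        simp only [Matrix.mulVec_mulVec]
        congr 2
        rw [← hTT]
        noncomm_ring
      rw [h1, h2]
    have hvv : star v ⬝ᵥ v = star (R *ᵥ z) ⬝ᵥ ((R * B * R) *ᵥ (R *ᵥ z)) := by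
      have h1 : star v ⬝ᵥ v = star z ⬝ᵥ ((C * B * C) *ᵥ z) := by
        rw [hv, dot_shift' S, hSH, dot_shift' C, hC.1.eq]
        simp only [Matrix.mulVec_mulVec]
        congr 2
        rw [← hSS]
        noncomm_ring
      have h2 : star (R *ᵥ z) ⬝ᵥ ((R * B * R) *ᵥ (R *ᵥ z)) = star z ⬝ᵥ ((C * B * C) *ᵥ z) := by
        rw [dot_shift' R, hRH]
        simp only [Matrix.mulVec_mulVec]
        congr 2
        rw [← hRR]
        noncomm_ring
      rw [h1, h2]
    have hub : star u ⬝ᵥ u ≤ (B * A).trace * (star z ⬝ᵥ (A *ᵥ z)) := by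
      rw [huu, ← hTz, ← htT]
      exact psd_dot_le_trace hTBT (T *ᵥ z)
    have hvb : star v ⬝ᵥ v ≤ (B * C).trace * (star z ⬝ᵥ (C *ᵥ z)) := by
      rw [hvv, ← hRz, ← htR]
      exact psd_dot_le_trace hRBR (R *ᵥ z)
    have hxy : star v ⬝ᵥ u = star (star u ⬝ᵥ v) := by
      simp [dotProduct, mul_comm]
    have haz : 0 ≤ star z ⬝ᵥ (A *ᵥ z) := hA.dotProduct_mulVec_nonneg z
    have hcz : 0 ≤ star z ⬝ᵥ (C *ᵥ z) := hC.dotProduct_mulVec_nonneg z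
    have goal_eq : star z ⬝ᵥ (((B * C).trace • A + (B * A).trace • C
        - (A * B * C + C * B * A)) *ᵥ z) =
        (B * C).trace * (star z ⬝ᵥ (A *ᵥ z)) + (B * A).trace * (star z ⬝ᵥ (C *ᵥ z))
          - (star u ⬝ᵥ v + star (star u ⬝ᵥ v)) := by
      rw [Matrix.sub_mulVec, Matrix.add_mulVec, Matrix.add_mulVec,
        Matrix.smul_mulVec, Matrix.smul_mulVec,
        dotProduct_sub, dotProduct_add, dotProduct_add, dotProduct_smul, dotProduct_smul,
        hABC, hCBA, hxy, smul_eq_mul, smul_eq_mul]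
    rw [goal_eq]
    -- pass to real parts
    have haim : (star z ⬝ᵥ (A *ᵥ z)).im = 0 := (Complex.nonneg_iff.mp haz).2.symm
    have hcim : (star z ⬝ᵥ (C *ᵥ z)).im = 0 := (Complex.nonneg_iff.mp hcz).2.symm
    have hare : 0 ≤ (star z ⬝ᵥ (A *ᵥ z)).re := (Complex.nonneg_iff.mp haz).1
    have hcre : 0 ≤ (star z ⬝ᵥ (C *ᵥ z)).re := (Complex.nonneg_iff.mp hcz).1
    have ht1im : ((B * C).trace).im = 0 := (Complex.nonneg_iff.mp htBC).2.symm
    have ht2im : ((B * A).trace).im = 0 := (Complex.nonneg_iff.mp htBA).2.symm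
    have ht1re : 0 ≤ ((B * C).trace).re := (Complex.nonneg_iff.mp htBC).1
    have ht2re : 0 ≤ ((B * A).trace).re := (Complex.nonneg_iff.mp htBA).1
    have hU0 : 0 ≤ (star u ⬝ᵥ u).re := (Complex.nonneg_iff.mp (dotProduct_star_self_nonneg u)).1
    have hV0 : 0 ≤ (star v ⬝ᵥ v).re := (Complex.nonneg_iff.mp (dotProduct_star_self_nonneg v)).1
    have hubre : (star u ⬝ᵥ u).re ≤ ((B * A).trace).re * (star z ⬝ᵥ (A *ᵥ z)).re := by
      have := (Complex.le_def.mp hub).1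
      rw [Complex.mul_re, haim, ht2im] at this
      simpa using this
    have hvbre : (star v ⬝ᵥ v).re ≤ ((B * C).trace).re * (star z ⬝ᵥ (C *ᵥ z)).re := by
      have := (Complex.le_def.mp hvb).1
      rw [Complex.mul_re, hcim, ht1im] at this
      simpa using this
    have hcs := cs_re u v
    -- key real inequality
    set P : ℝ := ((B * C).trace).re * (star z ⬝ᵥ (A *ᵥ z)).re with hP
    set Q : ℝ := ((B * A).trace).re * (star z ⬝ᵥ (C *ᵥ z)).re with hQ
    have hP0 : 0 ≤ P := mul_nonneg ht1re hare
    have hQ0 : 0 ≤ Q := mul_nonneg ht2re hcre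
    have hxPQ : (star u ⬝ᵥ v).re ^ 2 ≤ P * Q := by
      calc (star u ⬝ᵥ v).re ^ 2 ≤ (star u ⬝ᵥ u).re * (star v ⬝ᵥ v).re := hcs
        _ ≤ (((B * A).trace).re * (star z ⬝ᵥ (A *ᵥ z)).re) *
            (((B * C).trace).re * (star z ⬝ᵥ (C *ᵥ z)).re) :=
          mul_le_mul hubre hvbre hV0 (le_trans hU0 hubre)
        _ = P * Q := by rw [hP, hQ]; ring
    have hkey : 2 * (star u ⬝ᵥ v).re ≤ P + Q := amgm_aux _ _ _ hP0 hQ0 hxPQ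
    rw [Complex.nonneg_iff]
    have hre_eq : ((B * C).trace * (star z ⬝ᵥ (A *ᵥ z)) + (B * A).trace * (star z ⬝ᵥ (C *ᵥ z))
        - (star u ⬝ᵥ v + star (star u ⬝ᵥ v))).re = P + Q - 2 * (star u ⬝ᵥ v).re := by
      simp only [Complex.sub_re, Complex.add_re, Complex.mul_re, Complex.star_def,
        Complex.conj_re, haim, hcim, ht1im, ht2im, mul_zero, zero_mul, sub_zero, hP, hQ]
      ring
    have him_eq : ((B * C).trace * (star z ⬝ᵥ (A *ᵥ z)) + (B * A).trace * (star z ⬝ᵥ (C *ᵥ z))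
        - (star u ⬝ᵥ v + star (star u ⬝ᵥ v))).im = 0 := by
      simp only [Complex.sub_im, Complex.add_im, Complex.mul_im, Complex.star_def,
        Complex.conj_im, haim, hcim, ht1im, ht2im, mul_zero, zero_mul]
      ring
    refine ⟨?_, him_eq.symm⟩
    rw [hre_eq]
    linarith
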